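/- Let φ : R → R' be a Jordan homomorphism that is the sum of a homomorphism and an antihomomorphism on the commutator ideal K of R. Let L be the ideal of R generated by all [[x,y],z] (x, y, z ∈ R), and L' the ideal of R' generated by all [[x',y'],z'] (x', y', z' ∈ R'). Then φ(L) ⊆ L'; moreover, if φ is surjective, then φ(L) = L'. -/

import Mathlib

/-- An additive map `φ` between (possibly non-unital) associative rings is a
Jordan homomorphism if `φ(x²) = φ(x)²` and `φ(xyx) = φ(x)φ(y)φ(x)`. -/
def IsJordanHom {R R' : Type*} [NonUnitalRing R] [NonUnitalRing R'] (φ : R → R') : Prop :=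
  (∀ x y : R, φ (x + y) = φ x + φ y) ∧
  (∀ x : R, φ (x * x) = φ x * φ x) ∧
  (∀ x y : R, φ (x * y * x) = φ x * φ y * φ x)

/-- `R'_φ`: the (non-unital) subring of `R'` generated by the image of `φ`. -/
def rngGen {R R' : Type*} [NonUnitalRing R] [NonUnitalRing R'] (φ : R → R') :
    NonUnitalSubring R' :=
  NonUnitalSubring.closure (Set.range φ)

/-- `V_φ`: the two-sided ideal of `R'_φ` generated by all `{x,y} = φ(xy) − φ(x)φ(y)`. -/
def Vphi {R R' : Type*} [NonUnitalRing R] [NonUnitalRing R'] (φ : R → R') :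
    TwoSidedIdeal (rngGen φ) :=
  TwoSidedIdeal.span {a : rngGen φ | ∃ x y : R, (a : R') = φ (x * y) - φ x * φ y}

/-- `W_φ`: the two-sided ideal of `R'_φ` generated by all `⟨x,y⟩ = φ(xy) − φ(y)φ(x)`. -/
def Wphi {R R' : Type*} [NonUnitalRing R] [NonUnitalRing R'] (φ : R → R') :
    TwoSidedIdeal (rngGen φ) :=
  TwoSidedIdeal.span {a : rngGen φ | ∃ x y : R, (a : R') = φ (x * y) - φ y * φ x}

/-- `φ` is splittable if `V_φ ∩ W_φ = {0}`. -/
def Splittable {R R' : Type*} [NonUnitalRing R] [NonUnitalRing R'] (φ : R → R') : Prop :=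
  Vphi φ ⊓ Wphi φ = ⊥

/-- The commutator ideal of `R`: the two-sided ideal generated by all `xy − yx`. -/
def commutatorIdeal (R : Type*) [NonUnitalRing R] : TwoSidedIdeal R :=
  TwoSidedIdeal.span {z : R | ∃ x y : R, z = x * y - y * x}

/-- `φ` is the sum of the homomorphism `φ₁` and the antihomomorphism `φ₂` on the ideal
`I` of `R`; here `φ₁, φ₂ : R → R'_φ` are only constrained on `I`. -/
def IsSumHomAntihomWith {R R' : Type*} [NonUnitalRing R] [NonUnitalRing R']
    (φ : R → R') (I : TwoSidedIdeal R) (φ₁ φ₂ : R → rngGen φ) : Prop :=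
  (∀ u ∈ I, ∀ v ∈ I, φ₁ (u + v) = φ₁ u + φ₁ v) ∧
  (∀ u ∈ I, ∀ v ∈ I, φ₂ (u + v) = φ₂ u + φ₂ v) ∧
  (∀ u ∈ I, ∀ v ∈ I, φ₁ (u * v) = φ₁ u * φ₁ v) ∧
  (∀ u ∈ I, ∀ v ∈ I, φ₂ (u * v) = φ₂ v * φ₂ u) ∧
  (∀ u ∈ I, φ u = (φ₁ u : R') + (φ₂ u : R')) ∧
  (∃ J₁ J₂ : TwoSidedIdeal (rngGen φ),
    (∀ u ∈ I, φ₁ u ∈ J₁) ∧ (∀ u ∈ I, φ₂ u ∈ J₂) ∧ J₁ ⊓ J₂ = ⊥) ∧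
  (∀ u ∈ I, ∀ x : R, (φ₁ (u * x) : R') = (φ₁ u : R') * φ x ∧
      (φ₁ (x * u) : R') = φ x * (φ₁ u : R')) ∧
  (∀ u ∈ I, ∀ x : R, (φ₂ (u * x) : R') = φ x * (φ₂ u : R') ∧
      (φ₂ (x * u) : R') = (φ₂ u : R') * φ x)

/-- `φ` is the sum of a homomorphism and an antihomomorphism on the ideal `I` of `R`. -/
def IsSumHomAntihomOn {R R' : Type*} [NonUnitalRing R] [NonUnitalRing R']
    (φ : R → R') (I : TwoSidedIdeal R) : Prop :=
  ∃ φ₁ φ₂ : R → rngGen φ, IsSumHomAntihomWith φ I φ₁ φ₂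

/-- The ideal of `A` generated by all double commutators `[[x,y],z]`. -/
def doubleCommutatorIdeal (A : Type*) [NonUnitalRing A] : TwoSidedIdeal A :=
  TwoSidedIdeal.span
    {w : A | ∃ x y z : A, w = (x * y - y * x) * z - z * (x * y - y * x)}

section JordanAux

variable {R R' : Type*} [NonUnitalRing R] [NonUnitalRing R'] {φ : R → R'}

private lemma jh_sub (hadd : ∀ x y : R, φ (x + y) = φ x + φ y) (a b : R) :
    φ (a - b) = φ a - φ b := by
  have h := hadd (a - b) b
  rw [show a - b + b = a by abel] at h
  exact eq_sub_of_add_eq h.symm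

private lemma jh_zero (hadd : ∀ x y : R, φ (x + y) = φ x + φ y) : φ 0 = 0 := by
  have h := jh_sub hadd 0 0
  rw [sub_self] at h
  rw [sub_self] at h
  exact h

private lemma jh_neg (hadd : ∀ x y : R, φ (x + y) = φ x + φ y) (a : R) :
    φ (-a) = -φ a := by
  have h := jh_sub hadd 0 a
  rw [zero_sub] at h
  rw [h, jh_zero hadd, zero_sub]

private lemma jh_triple (hφ : IsJordanHom φ) (a b c : R) :
    φ (a * b * c + c * b * a) = φ a * φ b * φ c + φ c * φ b * φ a := by
  obtain ⟨hadd, -, htrip⟩ := hφ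
  have e2 := htrip (a + c) b
  rw [show (a + c) * b * (a + c) = a * b * a + (a * b * c + c * b * a) + c * b * c by
    noncomm_ring] at e2
  rw [hadd (a * b * a + (a * b * c + c * b * a)) (c * b * c),
    hadd (a * b * a) (a * b * c + c * b * a), hadd a c] at e2
  rw [htrip a b, htrip c b] at e2
  rw [show (φ a + φ c) * φ b * (φ a + φ c)
      = φ a * φ b * φ a + (φ a * φ b * φ c + φ c * φ b * φ a) + φ c * φ b * φ c by
    noncomm_ring] at e2
  exact add_left_cancel (add_right_cancel e2)

private lemma jh_dc (hφ : IsJordanHom φ) (x y z : R) :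
    φ ((x * y - y * x) * z - z * (x * y - y * x))
      = (φ x * φ y - φ y * φ x) * φ z - φ z * (φ x * φ y - φ y * φ x) := by
  have hadd := hφ.1
  rw [show (x * y - y * x) * z - z * (x * y - y * x)
      = (x * y * z + z * y * x) - (y * x * z + z * x * y) by noncomm_ring]
  rw [jh_sub hadd, jh_triple hφ x y z, jh_triple hφ y x z]
  noncomm_ring

end JordanAux


/-- If a Jordan homomorphism `φ` is the sum of a homomorphism and an antihomomorphism
on the commutator ideal `K` of `R`, then `φ(L) ⊆ L'`, where `L` (resp. `L'`) is the
ideal of `R` (resp. `R'`) generated by all `[[x,y],z]`; moreover, if `φ` is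
surjective then `φ(L) = L'`. -/
theorem jordanHom_maps_doubleCommutatorIdeal
    {R R' : Type*} [NonUnitalRing R] [NonUnitalRing R']
    (φ : R → R') (hφ : IsJordanHom φ)
    (hsum : IsSumHomAntihomOn φ (commutatorIdeal R)) :
    (∀ u ∈ doubleCommutatorIdeal R, φ u ∈ doubleCommutatorIdeal R') ∧
    (Function.Surjective φ →
      φ '' (doubleCommutatorIdeal R : Set R) = (doubleCommutatorIdeal R' : Set R')) := by
  classical
  obtain ⟨φ₁, φ₂, h1, h2, h3, h4, h5, ⟨J₁, J₂, hJ1, hJ2, hJ⟩, h7, h8⟩ := hsum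
  -- basic commutator membership
  have hcm : ∀ x y : R, x * y - y * x ∈ commutatorIdeal R := fun x y =>
    TwoSidedIdeal.subset_span ⟨x, y, rfl⟩
  -- additivity of φ₂ on K, at the level of values in R'
  have he2add : ∀ u v : R, u ∈ commutatorIdeal R → v ∈ commutatorIdeal R →
      (φ₂ (u + v) : R') = (φ₂ u : R') + (φ₂ v : R') := by
    intro u v hu hv; rw [h2 u hu v hv]; simp
  have he2zero : (φ₂ (0 : R) : R') = 0 := by
    have h := he2add 0 0 (TwoSidedIdeal.zero_mem _) (TwoSidedIdeal.zero_mem _)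
    rw [add_zero] at h
    exact (left_eq_add.mp h)
  have he2sub : ∀ u v : R, u ∈ commutatorIdeal R → v ∈ commutatorIdeal R →
      (φ₂ (u - v) : R') = (φ₂ u : R') - (φ₂ v : R') := by
    intro u v hu hv
    have h := he2add (u - v) v (TwoSidedIdeal.sub_mem _ hu hv) hv
    rw [show u - v + v = u by abel] at h
    exact eq_sub_of_add_eq h.symm
  -- zero products
  have zp12 : ∀ u v : R, u ∈ commutatorIdeal R → v ∈ commutatorIdeal R →
      (φ₁ u : R') * (φ₂ v : R') = 0 := by
    intro u v hu hv
    have hmem : (φ₁ u * φ₂ v : rngGen φ) ∈ J₁ ⊓ J₂ :=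
      (TwoSidedIdeal.mem_inf _).mpr
        ⟨J₁.mul_mem_right _ _ (hJ1 u hu), J₂.mul_mem_left _ _ (hJ2 v hv)⟩
    rw [hJ, TwoSidedIdeal.mem_bot] at hmem
    simpa using congrArg (Subtype.val : rngGen φ → R') hmem
  have zp21 : ∀ u v : R, u ∈ commutatorIdeal R → v ∈ commutatorIdeal R →
      (φ₂ u : R') * (φ₁ v : R') = 0 := by
    intro u v hu hv
    have hmem : (φ₂ u * φ₁ v : rngGen φ) ∈ J₁ ⊓ J₂ :=
      (TwoSidedIdeal.mem_inf _).mpr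
        ⟨J₁.mul_mem_left _ _ (hJ1 v hv), J₂.mul_mem_right _ _ (hJ2 u hu)⟩
    rw [hJ, TwoSidedIdeal.mem_bot] at hmem
    simpa using congrArg (Subtype.val : rngGen φ → R') hmem
  -- products inside K
  have hA : ∀ c w : R, c ∈ commutatorIdeal R → w ∈ commutatorIdeal R →
      (φ₂ (c * w) : R') = φ w * (φ₂ c : R') := by
    intro c w hc hw
    have h' : (φ₂ (c * w) : R') = (φ₂ w : R') * (φ₂ c : R') := by
      rw [h4 c hc w hw]; simp
    rw [h', h5 w hw, add_mul, zp12 w c hw hc, zero_add]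
  have hB : ∀ c w : R, c ∈ commutatorIdeal R → w ∈ commutatorIdeal R →
      (φ₂ (w * c) : R') = (φ₂ c : R') * φ w := by
    intro c w hc hw
    have h' : (φ₂ (w * c) : R') = (φ₂ c : R') * (φ₂ w : R') := by
      rw [h4 w hw c hc]; simp
    rw [h', h5 w hw, mul_add, zp21 c w hc hw, zero_add]
  have heg : ∀ u : R, u ∈ commutatorIdeal R → ∀ z : R,
      (φ₂ (u * z - z * u) : R') = φ z * (φ₂ u : R') - (φ₂ u : R') * φ z := by
    intro u hu z
    rw [he2sub (u * z) (z * u) (TwoSidedIdeal.mul_mem_right _ _ _ hu)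
      (TwoSidedIdeal.mul_mem_left _ _ _ hu), (h8 u hu z).1, (h8 u hu z).2]
  -- notation shortcuts
  have hadd := hφ.1
  -- Part 1 : the invariant ideal C₀
  set L' := doubleCommutatorIdeal R' with hL'def
  set C₀ : Set R := {w : R | w ∈ commutatorIdeal R ∧ φ w ∈ doubleCommutatorIdeal R' ∧
    ∀ s : R, (φ₂ w : R') * φ s - φ s * (φ₂ w : R') ∈ doubleCommutatorIdeal R'} with hC₀def
  have hC0zero : (0 : R) ∈ C₀ := by
    refine ⟨TwoSidedIdeal.zero_mem _, ?_, ?_⟩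
    · rw [jh_zero hadd]; exact TwoSidedIdeal.zero_mem _
    · intro s; rw [he2zero, zero_mul, mul_zero, sub_zero]; exact TwoSidedIdeal.zero_mem _
  have hC0add : ∀ {u v : R}, u ∈ C₀ → v ∈ C₀ → u + v ∈ C₀ := by
    rintro u v ⟨huK, huL, huc⟩ ⟨hvK, hvL, hvc⟩
    refine ⟨TwoSidedIdeal.add_mem _ huK hvK, ?_, ?_⟩
    · rw [hadd]; exact TwoSidedIdeal.add_mem _ huL hvL
    · intro s
      rw [he2add u v huK hvK, show ((φ₂ u : R') + (φ₂ v : R')) * φ s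
          - φ s * ((φ₂ u : R') + (φ₂ v : R'))
          = ((φ₂ u : R') * φ s - φ s * (φ₂ u : R'))
            + ((φ₂ v : R') * φ s - φ s * (φ₂ v : R')) by noncomm_ring]
      exact TwoSidedIdeal.add_mem _ (huc s) (hvc s)
  have hC0neg : ∀ {u : R}, u ∈ C₀ → -u ∈ C₀ := by
    rintro u ⟨huK, huL, huc⟩
    have hne : (φ₂ (-u) : R') = -(φ₂ u : R') := by
      have h := he2add u (-u) huK (TwoSidedIdeal.neg_mem _ huK)
      rw [add_neg_cancel, he2zero] at h
      exact (neg_eq_of_add_eq_zero_right h.symm).symm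
    refine ⟨TwoSidedIdeal.neg_mem _ huK, ?_, ?_⟩
    · rw [jh_neg hadd]; exact TwoSidedIdeal.neg_mem _ huL
    · intro s
      rw [hne, show (-(φ₂ u : R')) * φ s - φ s * (-(φ₂ u : R'))
          = -((φ₂ u : R') * φ s - φ s * (φ₂ u : R')) by noncomm_ring]
      exact TwoSidedIdeal.neg_mem _ (huc s)
  have hC0ml : ∀ {x w : R}, w ∈ C₀ → x * w ∈ C₀ := by
    rintro x w ⟨hwK, hwL, hwc⟩
    have hxwK : x * w ∈ commutatorIdeal R := TwoSidedIdeal.mul_mem_left _ _ _ hwK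
    refine ⟨hxwK, ?_, ?_⟩
    · have E0 : φ (x * w) = φ x * φ w + ((φ₂ w : R') * φ x - φ x * (φ₂ w : R')) := by
        rw [h5 (x * w) hxwK, (h7 w hwK x).2, (h8 w hwK x).2, h5 w hwK]
        noncomm_ring
      rw [E0]
      exact TwoSidedIdeal.add_mem _ (TwoSidedIdeal.mul_mem_left _ _ _ hwL) (hwc x)
    · intro s
      have hswK : s * w ∈ commutatorIdeal R := TwoSidedIdeal.mul_mem_left _ _ _ hwK
      have k0 : (φ₂ (x * w) : R') = (φ₂ w : R') * φ x := (h8 w hwK x).2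
      have k1 : (φ₂ (s * (x * w)) : R') = (φ₂ w : R') * φ x * φ s := by
        rw [(h8 (x * w) hxwK s).2, k0]
      have k2 : (φ₂ (x * (s * w)) : R') = (φ₂ w : R') * φ s * φ x := by
        rw [(h8 (s * w) hswK x).2, (h8 w hwK s).2]
      have k3 : (φ₂ ((s * x - x * s) * w) : R')
          = (φ₂ w : R') * φ x * φ s - (φ₂ w : R') * φ s * φ x := by
        rw [show (s * x - x * s) * w = s * (x * w) - x * (s * w) by noncomm_ring,
          he2sub _ _ (TwoSidedIdeal.mul_mem_left _ _ _ hxwK)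
            (TwoSidedIdeal.mul_mem_left _ _ _ hswK), k1, k2]
      have k4 : (φ₂ ((s * x - x * s) * w) : R') = φ w * (φ₂ (s * x - x * s) : R') :=
        hA (s * x - x * s) w (hcm s x) hwK
      have E : (φ₂ (x * w) : R') * φ s - φ s * (φ₂ (x * w) : R')
          = φ w * (φ₂ (s * x - x * s) : R')
            + ((φ₂ w : R') * φ s - φ s * (φ₂ w : R')) * φ x := by
        rw [k0, ← k4, k3]; noncomm_ring
      rw [E]
      exact TwoSidedIdeal.add_mem _ (TwoSidedIdeal.mul_mem_right _ _ _ hwL)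
        (TwoSidedIdeal.mul_mem_right _ _ _ (hwc s))
  have hC0mr : ∀ {w x : R}, w ∈ C₀ → w * x ∈ C₀ := by
    rintro w x ⟨hwK, hwL, hwc⟩
    have hwxK : w * x ∈ commutatorIdeal R := TwoSidedIdeal.mul_mem_right _ _ _ hwK
    refine ⟨hwxK, ?_, ?_⟩
    · have E0 : φ (w * x) = φ w * φ x - ((φ₂ w : R') * φ x - φ x * (φ₂ w : R')) := by
        rw [h5 (w * x) hwxK, (h7 w hwK x).1, (h8 w hwK x).1, h5 w hwK]
        noncomm_ring
      rw [E0]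
      exact TwoSidedIdeal.sub_mem _ (TwoSidedIdeal.mul_mem_right _ _ _ hwL) (hwc x)
    · intro s
      have hwsK : w * s ∈ commutatorIdeal R := TwoSidedIdeal.mul_mem_right _ _ _ hwK
      have k0 : (φ₂ (w * x) : R') = φ x * (φ₂ w : R') := (h8 w hwK x).1
      have k1 : (φ₂ ((w * s) * x) : R') = φ x * (φ s * (φ₂ w : R')) := by
        rw [(h8 (w * s) hwsK x).1, (h8 w hwK s).1]
      have k2 : (φ₂ ((w * x) * s) : R') = φ s * (φ x * (φ₂ w : R')) := by
        rw [(h8 (w * x) hwxK s).1, k0]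
      have k3 : (φ₂ (w * (s * x - x * s)) : R')
          = φ x * (φ s * (φ₂ w : R')) - φ s * (φ x * (φ₂ w : R')) := by
        rw [show w * (s * x - x * s) = (w * s) * x - (w * x) * s by noncomm_ring,
          he2sub _ _ (TwoSidedIdeal.mul_mem_right _ _ _ hwsK)
            (TwoSidedIdeal.mul_mem_right _ _ _ hwxK), k1, k2]
      have k4 : (φ₂ (w * (s * x - x * s)) : R') = (φ₂ (s * x - x * s) : R') * φ w :=
        hB (s * x - x * s) w (hcm s x) hwK
      have E : (φ₂ (w * x) : R') * φ s - φ s * (φ₂ (w * x) : R')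
          = (φ₂ (s * x - x * s) : R') * φ w
            + φ x * ((φ₂ w : R') * φ s - φ s * (φ₂ w : R')) := by
        rw [k0, ← k4, k3]; noncomm_ring
      rw [E]
      exact TwoSidedIdeal.add_mem _ (TwoSidedIdeal.mul_mem_left _ _ _ hwL)
        (TwoSidedIdeal.mul_mem_left _ _ _ (hwc s))
  set J₀ : TwoSidedIdeal R := TwoSidedIdeal.mk' C₀ hC0zero hC0add hC0neg hC0ml hC0mr
    with hJ₀def
  have hgen : ∀ w ∈ {w : R | ∃ x y z : R,
      w = (x * y - y * x) * z - z * (x * y - y * x)}, w ∈ C₀ := by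
    rintro w ⟨x, y, z, rfl⟩
    have huK := hcm x y
    have hgK : (x * y - y * x) * z - z * (x * y - y * x) ∈ commutatorIdeal R :=
      TwoSidedIdeal.sub_mem _ (TwoSidedIdeal.mul_mem_right _ _ _ huK)
        (TwoSidedIdeal.mul_mem_left _ _ _ huK)
    refine ⟨hgK, ?_, ?_⟩
    · rw [jh_dc hφ x y z]
      exact TwoSidedIdeal.subset_span ⟨φ x, φ y, φ z, rfl⟩
    · intro s
      rw [heg (x * y - y * x) huK z]
      exact TwoSidedIdeal.subset_span ⟨φ z, (φ₂ (x * y - y * x) : R'), φ s, by noncomm_ring⟩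
  have hL0 : ∀ w ∈ doubleCommutatorIdeal R, w ∈ C₀ := by
    intro w hw
    have hw' : w ∈ J₀ := TwoSidedIdeal.mem_span_iff.mp hw J₀
      (fun t ht => (TwoSidedIdeal.mem_mk' _ _ _ _ _ _ t).mpr (hgen t ht))
    exact (TwoSidedIdeal.mem_mk' _ _ _ _ _ _ w).mp hw'
  have part1 : ∀ u ∈ doubleCommutatorIdeal R, φ u ∈ doubleCommutatorIdeal R' :=
    fun u hu => (hL0 u hu).2.1
  -- Part 2 : surjective case
  have part2 : Function.Surjective φ →
      φ '' (doubleCommutatorIdeal R : Set R) = (doubleCommutatorIdeal R' : Set R') := by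
    intro hsurj
    apply Set.Subset.antisymm
    · rintro _ ⟨ℓ, hℓ, rfl⟩
      exact part1 ℓ hℓ
    · intro ξ hξ
      set S₂ : Set R' := {w : R' | ∃ a b c : R', w = (a * b - b * a) * c - c * (a * b - b * a)}
        ∪ {w : R' | ∃ a b c e : R',
            w = ((a * b - b * a) * c - c * (a * b - b * a)) * e} with hS₂def
      set A : AddSubgroup R' := AddSubgroup.closure S₂ with hAdef
      have hmulL : ∀ (r : R'), ∀ a ∈ A, r * a ∈ A := by
        intro r a ha
        induction ha using AddSubgroup.closure_induction with
        | mem t ht =>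
          rcases ht with ⟨a, b, c, rfl⟩ | ⟨a, b, c, e, rfl⟩
          · rw [show r * ((a * b - b * a) * c - c * (a * b - b * a))
                = ((a * b - b * a) * (r * c) - (r * c) * (a * b - b * a))
                  - (((a * b - b * a) * r - r * (a * b - b * a)) * c) by noncomm_ring]
            exact sub_mem (AddSubgroup.subset_closure (Or.inl ⟨a, b, r * c, rfl⟩))
              (AddSubgroup.subset_closure (Or.inr ⟨a, b, r, c, rfl⟩))
          · rw [show r * (((a * b - b * a) * c - c * (a * b - b * a)) * e)
                = ((a * b - b * a) * (r * c) - (r * c) * (a * b - b * a)) * e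
                  - ((a * b - b * a) * r - r * (a * b - b * a)) * (c * e) by noncomm_ring]
            exact sub_mem (AddSubgroup.subset_closure (Or.inr ⟨a, b, r * c, e, rfl⟩))
              (AddSubgroup.subset_closure (Or.inr ⟨a, b, r, c * e, rfl⟩))
        | zero => rw [mul_zero]; exact zero_mem A
        | add p q hp hq ihp ihq => rw [mul_add]; exact add_mem ihp ihq
        | neg p hp ihp => rw [mul_neg]; exact neg_mem ihp
      have hmulR : ∀ (r : R'), ∀ a ∈ A, a * r ∈ A := by
        intro r a ha
        induction ha using AddSubgroup.closure_induction with
        | mem t ht =>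
          rcases ht with ⟨a, b, c, rfl⟩ | ⟨a, b, c, e, rfl⟩
          · exact AddSubgroup.subset_closure (Or.inr ⟨a, b, c, r, rfl⟩)
          · rw [mul_assoc]
            exact AddSubgroup.subset_closure (Or.inr ⟨a, b, c, e * r, rfl⟩)
        | zero => rw [zero_mul]; exact zero_mem A
        | add p q hp hq ihp ihq => rw [add_mul]; exact add_mem ihp ihq
        | neg p hp ihp => rw [neg_mul]; exact neg_mem ihp
      set Jb : TwoSidedIdeal R' := TwoSidedIdeal.mk' (A : Set R') (zero_mem A)
        (fun hx hy => add_mem hx hy) (fun hx => neg_mem hx)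
        (fun {x y} hy => hmulL x y hy) (fun {x y} hx => hmulR y x hx) with hJbdef
      have hxiA : ξ ∈ A := by
        have hξ' : ξ ∈ doubleCommutatorIdeal R' := hξ
        have h' : ξ ∈ Jb := TwoSidedIdeal.mem_span_iff.mp hξ' Jb
          (fun t ht => (TwoSidedIdeal.mem_mk' _ _ _ _ _ _ t).mpr
            (AddSubgroup.subset_closure (Or.inl ht)))
        exact (TwoSidedIdeal.mem_mk' _ _ _ _ _ _ ξ).mp h'
      clear hξ
      induction hxiA using AddSubgroup.closure_induction with
      | mem t ht =>
        rcases ht with ⟨a, b, c, rfl⟩ | ⟨a, b, c, e, rfl⟩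
        · obtain ⟨x, rfl⟩ := hsurj a
          obtain ⟨y, rfl⟩ := hsurj b
          obtain ⟨z, rfl⟩ := hsurj c
          exact ⟨(x * y - y * x) * z - z * (x * y - y * x),
            TwoSidedIdeal.subset_span ⟨x, y, z, rfl⟩, (jh_dc hφ x y z)⟩
        · obtain ⟨x, rfl⟩ := hsurj a
          obtain ⟨y, rfl⟩ := hsurj b
          obtain ⟨z, rfl⟩ := hsurj c
          obtain ⟨w, rfl⟩ := hsurj e
          obtain ⟨s, hs⟩ := hsurj ((φ₂ (x * y - y * x) : R'))
          have huK := hcm x y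
          have hgK : (x * y - y * x) * z - z * (x * y - y * x) ∈ commutatorIdeal R :=
            TwoSidedIdeal.sub_mem _ (TwoSidedIdeal.mul_mem_right _ _ _ huK)
              (TwoSidedIdeal.mul_mem_left _ _ _ huK)
          have hgwK : ((x * y - y * x) * z - z * (x * y - y * x)) * w ∈ commutatorIdeal R :=
            TwoSidedIdeal.mul_mem_right _ _ _ hgK
          have hgL : (x * y - y * x) * z - z * (x * y - y * x) ∈ doubleCommutatorIdeal R :=
            TwoSidedIdeal.subset_span ⟨x, y, z, rfl⟩
          have hhL : (s * z - z * s) * w - w * (s * z - z * s) ∈ doubleCommutatorIdeal R :=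
            TwoSidedIdeal.subset_span ⟨s, z, w, rfl⟩
          refine ⟨((x * y - y * x) * z - z * (x * y - y * x)) * w
            - ((s * z - z * s) * w - w * (s * z - z * s)), ?_, ?_⟩
          · exact TwoSidedIdeal.sub_mem _
              (TwoSidedIdeal.mul_mem_right _ _ _ hgL) hhL
          · -- the value computation
            have E1 : φ (((x * y - y * x) * z - z * (x * y - y * x)) * w)
                = (φ₁ ((x * y - y * x) * z - z * (x * y - y * x)) : R') * φ w
                  + φ w * (φ₂ ((x * y - y * x) * z - z * (x * y - y * x)) : R') := by
              rw [h5 _ hgwK, (h7 _ hgK w).1, (h8 _ hgK w).1]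
            have E2 : φ ((s * z - z * s) * w - w * (s * z - z * s))
                = φ w * (φ₂ ((x * y - y * x) * z - z * (x * y - y * x)) : R')
                  - (φ₂ ((x * y - y * x) * z - z * (x * y - y * x)) : R') * φ w := by
              rw [jh_dc hφ s z w, hs, heg (x * y - y * x) huK z]
              noncomm_ring
            rw [jh_sub hadd, E1, E2, ← jh_dc hφ x y z, h5 _ hgK]
            noncomm_ring
      | zero => exact ⟨0, TwoSidedIdeal.zero_mem _, jh_zero hadd⟩
      | add p q hp hq ihp ihq =>
        obtain ⟨l1, hl1, rfl⟩ := ihp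
        obtain ⟨l2, hl2, rfl⟩ := ihq
        exact ⟨l1 + l2, TwoSidedIdeal.add_mem _ hl1 hl2, hadd l1 l2⟩
      | neg p hp ihp =>
        obtain ⟨l, hl, rfl⟩ := ihp
        exact ⟨-l, TwoSidedIdeal.neg_mem _ hl, jh_neg hadd l⟩
  exact ⟨part1, part2⟩
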